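/- Let K ≥ 1, n ≥ K+1 be integers and s ∈ [0,1]. Under the random pruning-edge model, the variance of |Z| equals Σ_{v=K+2}^{n} (1-s)^{(v-K-1)(n-v+1)} − Σ_{v=K+2}^{n} (1-s)^{2(v-K-1)(n-v+1)} + 2·Σ_{K+2 ≤ v₁ < v₂ ≤ n} (1-s)^{(v₁-K-1)(n-v₁+1) + (v₂-v₁)(n-v₂+1)} − 2·Σ_{K+2 ≤ v₁ < v₂ ≤ n} (1-s)^{(v₁-K-1)(n-v₁+1) + (v₂-K-1)(n-v₂+1)}. -/

import Mathlib

open MeasureTheory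

/-- Potential pruning edges: pairs `(u,w)` with `1 ≤ u` and `u + K < w ≤ n`. -/
abbrev EdgeIdx (K n : ℕ) : Type :=
  {p : Fin (n + 1) × Fin (n + 1) // 1 ≤ (p.1 : ℕ) ∧ (p.1 : ℕ) + K < (p.2 : ℕ)}

/-- The pruning edge `e` covers the vertex `v` if `u + K < v ≤ w`. -/
def covers {K n : ℕ} (e : EdgeIdx K n) (v : ℕ) : Prop :=
  (e.1.1 : ℕ) + K < v ∧ v ≤ (e.1.2 : ℕ)

instance {K n : ℕ} (e : EdgeIdx K n) (v : ℕ) : Decidable (covers e v) := by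
  unfold covers; infer_instance

/-- The set `Z(ω)` of vertices `v ∈ {K+1, …, n}` covered by no present pruning edge. -/
def Zset (K n : ℕ) (ω : EdgeIdx K n → Bool) : Finset ℕ :=
  (Finset.Icc (K + 1) n).filter fun v => ∀ e : EdgeIdx K n, ω e = true → ¬ covers e v

/-- The product probability measure on outcomes `ω : EdgeIdx K n → Bool`, where each
potential pruning edge is independently present with probability `s` (for `s ∈ [0,1]`;
the parameter is clamped to `[0,1]`, which is the identity for such `s`). -/
noncomputable def prunMeasure (K n : ℕ) (s : ℝ) : Measure (EdgeIdx K n → Bool) :=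
  Measure.pi fun _ =>
    (PMF.bernoulli (min (Real.toNNReal s) 1) (min_le_right _ _)).toMeasure

lemma count_lemma (K n v v' : ℕ) (hv' : v' ≤ n) (hvv' : v ≤ v') :
    (Finset.univ.filter (fun e : EdgeIdx K n => (e.1.1 : ℕ) + K < v ∧ v' ≤ (e.1.2 : ℕ))).card
      = (v - K - 1) * (n - v' + 1) := by
  have e1 : (Finset.Icc 1 (v - K - 1)).card = v - K - 1 := by rw [Nat.card_Icc]; omega
  have e2 : (Finset.Icc v' n).card = n - v' + 1 := by rw [Nat.card_Icc]; omega
  rw [← e1, ← e2, ← Finset.card_product]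
  refine Finset.card_bij (fun e _ => (((e : EdgeIdx K n).1.1 : ℕ), ((e : EdgeIdx K n).1.2 : ℕ))) ?_ ?_ ?_
  · rintro ⟨⟨u, w⟩, hu, huw⟩ he
    simp only [Finset.mem_filter, Finset.mem_univ, true_and] at he
    simp only [Finset.mem_product, Finset.mem_Icc]
    refine ⟨⟨hu, ?_⟩, he.2, Nat.lt_succ_iff.mp w.isLt⟩
    omega
  · rintro ⟨⟨u₁, w₁⟩, h₁⟩ _ ⟨⟨u₂, w₂⟩, h₂⟩ _ h
    simp only [Prod.mk.injEq] at h
    exact Subtype.ext (Prod.ext (Fin.ext h.1) (Fin.ext h.2))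
  · rintro ⟨u, w⟩ hp
    simp only [Finset.mem_product, Finset.mem_Icc] at hp
    refine ⟨⟨(⟨u, by omega⟩, ⟨w, by omega⟩), ⟨hp.1.1, show u + K < w by omega⟩⟩, ?_, rfl⟩
    simp only [Finset.mem_filter, Finset.mem_univ, true_and]
    constructor <;> omega

lemma measure_event (K n : ℕ) (s : ℝ) (hs0 : 0 ≤ s) (hs1 : s ≤ 1) (T : Finset (EdgeIdx K n)) :
    prunMeasure K n s {ω | ∀ e ∈ T, ω e = false} = ENNReal.ofReal (1 - s) ^ T.card := by
  have hset : {ω : EdgeIdx K n → Bool | ∀ e ∈ T, ω e = false}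
      = Set.univ.pi (fun e => if e ∈ T then ({false} : Set Bool) else Set.univ) := by
    ext ω
    simp only [Set.mem_setOf_eq, Set.mem_pi, Set.mem_univ, true_implies]
    constructor
    · intro h e
      by_cases he : e ∈ T <;> simp [he, h e]
    · intro h e he
      have := h e
      simpa [he] using this
  have hν : ∀ e : EdgeIdx K n,
      (PMF.bernoulli (min (Real.toNNReal s) 1) (min_le_right _ _)).toMeasure
        (if e ∈ T then ({false} : Set Bool) else Set.univ)
      = if e ∈ T then ENNReal.ofReal (1 - s) else 1 := by
    intro e
    by_cases he : e ∈ T <;> simp only [he, if_true, if_false]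
    · rw [PMF.toMeasure_apply_singleton _ _ (measurableSet_singleton _), PMF.bernoulli_apply]
      rw [min_eq_left (by simpa using hs1)]
      show 1 - ((Real.toNNReal s : ENNReal)) = ENNReal.ofReal (1 - s)
      rw [ENNReal.ofReal_sub _ hs0, ENNReal.ofReal_one]
      rfl
    · exact measure_univ
  rw [prunMeasure, hset, Measure.pi_pi]
  simp only [hν]
  rw [Finset.prod_ite_mem, Finset.univ_inter, Finset.prod_const]

def Tv (K n v : ℕ) : Finset (EdgeIdx K n) := Finset.univ.filter (fun e => covers e v)

def Aev (K n : ℕ) (T : Finset (EdgeIdx K n)) : Set (EdgeIdx K n → Bool) :=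
  {ω | ∀ e ∈ T, ω e = false}

lemma card_as_sum (K n : ℕ) (ω : EdgeIdx K n → Bool) :
    ((Zset K n ω).card : ℝ)
      = ∑ v ∈ Finset.Icc (K + 1) n, (Aev K n (Tv K n v)).indicator 1 ω := by
  rw [Zset, Finset.card_filter]
  push_cast
  refine Finset.sum_congr rfl fun v _ => ?_
  by_cases h : ω ∈ Aev K n (Tv K n v)
  · rw [Set.indicator_of_mem h, if_pos]
    · rfl
    · intro e het hc
      have := h e (by simp [Tv, hc])
      rw [this] at het; exact Bool.false_ne_true het
  · rw [Set.indicator_of_notMem h, if_neg]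
    intro hall
    exact h fun e he => by
      have hc : covers e v := by simpa [Tv] using he
      by_contra hne
      exact hall e (by simpa using hne) hc

lemma integral_card (K n : ℕ) (s : ℝ) (hs0 : 0 ≤ s) (hs1 : s ≤ 1) :
    ∫ ω, ((Zset K n ω).card : ℝ) ∂(prunMeasure K n s)
      = ∑ v ∈ Finset.Icc (K + 1) n, (1 - s) ^ (Tv K n v).card := by
  haveI : IsProbabilityMeasure (prunMeasure K n s) := by
    unfold prunMeasure; infer_instance
  simp only [card_as_sum]
  rw [integral_finset_sum _ fun v _ => Integrable.of_finite]
  refine Finset.sum_congr rfl fun v _ => ?_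
  rw [integral_indicator_one MeasurableSet.of_discrete]
  rw [show Aev K n (Tv K n v) = {ω | ∀ e ∈ Tv K n v, ω e = false} from rfl, measureReal_def,
    measure_event K n s hs0 hs1, ENNReal.toReal_pow, ENNReal.toReal_ofReal (by linarith)]

lemma integral_card_sq (K n : ℕ) (s : ℝ) (hs0 : 0 ≤ s) (hs1 : s ≤ 1) :
    ∫ ω, ((Zset K n ω).card : ℝ) ^ 2 ∂(prunMeasure K n s)
      = ∑ v₁ ∈ Finset.Icc (K + 1) n, ∑ v₂ ∈ Finset.Icc (K + 1) n,
          (1 - s) ^ (Tv K n v₁ ∪ Tv K n v₂).card := by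
  haveI : IsProbabilityMeasure (prunMeasure K n s) := by
    unfold prunMeasure; infer_instance
  have hsq : ∀ ω, ((Zset K n ω).card : ℝ) ^ 2
      = ∑ v₁ ∈ Finset.Icc (K + 1) n, ∑ v₂ ∈ Finset.Icc (K + 1) n,
          (Aev K n (Tv K n v₁ ∪ Tv K n v₂)).indicator 1 ω := by
    intro ω
    rw [sq, card_as_sum, Finset.sum_mul_sum]
    refine Finset.sum_congr rfl fun v₁ _ => Finset.sum_congr rfl fun v₂ _ => ?_
    have : Aev K n (Tv K n v₁ ∪ Tv K n v₂) = Aev K n (Tv K n v₁) ∩ Aev K n (Tv K n v₂) := by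
      ext ω'; simp [Aev, or_imp, forall_and]
    rw [this, Set.inter_indicator_one]
    rfl
  simp only [hsq]
  rw [integral_finset_sum _ fun v _ => Integrable.of_finite]
  refine Finset.sum_congr rfl fun v₁ _ => ?_
  rw [integral_finset_sum _ fun v _ => Integrable.of_finite]
  refine Finset.sum_congr rfl fun v₂ _ => ?_
  rw [integral_indicator_one MeasurableSet.of_discrete]
  rw [show Aev K n (Tv K n v₁ ∪ Tv K n v₂) = {ω | ∀ e ∈ Tv K n v₁ ∪ Tv K n v₂, ω e = false} from rfl, measureReal_def,
    measure_event K n s hs0 hs1, ENNReal.toReal_pow, ENNReal.toReal_ofReal (by linarith)]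

lemma Tv_card (K n v : ℕ) (hv : K + 1 ≤ v) (hn : v ≤ n) :
    (Tv K n v).card = (v - K - 1) * (n - v + 1) := by
  have : Tv K n v
      = Finset.univ.filter (fun e : EdgeIdx K n => (e.1.1 : ℕ) + K < v ∧ v ≤ (e.1.2 : ℕ)) := by
    ext e; simp only [Tv, Finset.mem_filter]; simp [covers]
  rw [this, count_lemma K n v v hn le_rfl]

lemma Tv_empty (K n : ℕ) : Tv K n (K + 1) = ∅ := by
  ext e
  simp only [Tv, Finset.mem_filter, Finset.mem_univ, true_and, Finset.notMem_empty,
    iff_false]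
  simp only [covers, not_and]
  intro h
  exact absurd e.2.1 (by omega)

lemma union_card (K n v₁ v₂ : ℕ) (h1 : K + 1 ≤ v₁) (h12 : v₁ < v₂) (h2 : v₂ ≤ n) :
    (Tv K n v₁ ∪ Tv K n v₂).card
      = (v₁ - K - 1) * (n - v₁ + 1) + (v₂ - v₁) * (n - v₂ + 1) := by
  have hA : (Tv K n v₁).card = (v₁ - K - 1) * (n - v₁ + 1) := Tv_card K n v₁ h1 (by omega)
  have hB : (Tv K n v₂).card = (v₂ - K - 1) * (n - v₂ + 1) := Tv_card K n v₂ (by omega) h2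
  have hI : (Tv K n v₁ ∩ Tv K n v₂).card = (v₁ - K - 1) * (n - v₂ + 1) := by
    have : Tv K n v₁ ∩ Tv K n v₂
        = Finset.univ.filter (fun e : EdgeIdx K n => (e.1.1 : ℕ) + K < v₁ ∧ v₂ ≤ (e.1.2 : ℕ)) := by
      ext e; simp only [Tv, Finset.mem_inter, Finset.mem_filter]; simp [covers]; omega
    rw [this, count_lemma K n v₁ v₂ h2 (le_of_lt h12)]
  have hkey := Finset.card_union_add_card_inter (Tv K n v₁) (Tv K n v₂)
  rw [hA, hB, hI] at hkey
  have hsplit : (v₂ - K - 1) * (n - v₂ + 1)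
      = (v₁ - K - 1) * (n - v₂ + 1) + (v₂ - v₁) * (n - v₂ + 1) := by
    rw [← Nat.add_mul]; congr 1; omega
  omega

lemma sum_split (S : Finset ℕ) (h : ℕ → ℕ → ℝ) (hsymm : ∀ a b, h a b = h b a) :
    ∑ a ∈ S, ∑ b ∈ S, h a b
      = ∑ a ∈ S, h a a + 2 * ∑ a ∈ S, ∑ b ∈ S.filter (fun b => a < b), h a b := by
  have inner : ∀ a ∈ S, ∑ b ∈ S, h a b
      = h a a + ∑ b ∈ S.filter (fun b => a < b), h a b
        + ∑ b ∈ S.filter (fun b => b < a), h a b := by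
    intro a ha
    rw [← Finset.sum_filter_add_sum_filter_not S (fun b => b < a) (h a)]
    have : S.filter (fun b => ¬ b < a) = insert a (S.filter (fun b => a < b)) := by
      ext b
      simp only [Finset.mem_filter, Finset.mem_insert, not_lt]
      constructor
      · rintro ⟨hb, hab⟩
        rcases eq_or_lt_of_le hab with h' | h'
        · exact Or.inl h'.symm
        · exact Or.inr ⟨hb, h'⟩
      · rintro (rfl | ⟨hb, h'⟩)
        · exact ⟨ha, le_rfl⟩
        · exact ⟨hb, le_of_lt h'⟩
    rw [this, Finset.sum_insert (by simp)]
    ring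
  rw [Finset.sum_congr rfl inner]
  have hswap : ∑ a ∈ S, ∑ b ∈ S.filter (fun b => b < a), h a b
      = ∑ a ∈ S, ∑ b ∈ S.filter (fun b => a < b), h a b := by
    simp only [Finset.sum_filter]
    rw [Finset.sum_comm]
    exact Finset.sum_congr rfl fun a _ => Finset.sum_congr rfl fun b _ => by
      by_cases hab : a < b <;> simp [hab, hsymm a b]
  rw [Finset.sum_add_distrib, Finset.sum_add_distrib, hswap]
  ring

/-- The variance of `|Z|`, i.e. `E(|Z|²) − (E(|Z|))²`, equals the stated formula. -/
theorem stmt6 (K n : ℕ) (hK : 1 ≤ K) (hn : K + 1 ≤ n)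
    (s : ℝ) (hs0 : 0 ≤ s) (hs1 : s ≤ 1) :
    (∫ ω, (((Zset K n ω).card : ℝ)) ^ 2 ∂(prunMeasure K n s))
      - (∫ ω, ((Zset K n ω).card : ℝ) ∂(prunMeasure K n s)) ^ 2
    = (∑ v ∈ Finset.Icc (K + 2) n, (1 - s) ^ ((v - K - 1) * (n - v + 1)))
      - (∑ v ∈ Finset.Icc (K + 2) n, (1 - s) ^ (2 * ((v - K - 1) * (n - v + 1))))
      + 2 * (∑ v₁ ∈ Finset.Icc (K + 2) n, ∑ v₂ ∈ Finset.Ioc v₁ n,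
          (1 - s) ^ ((v₁ - K - 1) * (n - v₁ + 1) + (v₂ - v₁) * (n - v₂ + 1)))
      - 2 * (∑ v₁ ∈ Finset.Icc (K + 2) n, ∑ v₂ ∈ Finset.Ioc v₁ n,
          (1 - s) ^ ((v₁ - K - 1) * (n - v₁ + 1) + (v₂ - K - 1) * (n - v₂ + 1))) := by
  set g : ℕ → ℕ → ℝ := fun a b => (1 - s) ^ (Tv K n a ∪ Tv K n b).card
      - (1 - s) ^ (Tv K n a).card * (1 - s) ^ (Tv K n b).card with hg
  have hsymm : ∀ a b, g a b = g b a := by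
    intro a b; simp only [hg, Finset.union_comm, mul_comm]
  have step1 : (∫ ω, (((Zset K n ω).card : ℝ)) ^ 2 ∂(prunMeasure K n s))
      - (∫ ω, ((Zset K n ω).card : ℝ) ∂(prunMeasure K n s)) ^ 2
      = ∑ a ∈ Finset.Icc (K + 1) n, ∑ b ∈ Finset.Icc (K + 1) n, g a b := by
    rw [integral_card K n s hs0 hs1, integral_card_sq K n s hs0 hs1, sq, Finset.sum_mul_sum]
    rw [← Finset.sum_sub_distrib]
    refine Finset.sum_congr rfl fun a _ => ?_
    rw [← Finset.sum_sub_distrib]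
  rw [step1, sum_split _ g hsymm]
  have hfilter : ∀ a ∈ Finset.Icc (K + 1) n,
      (Finset.Icc (K + 1) n).filter (fun b => a < b) = Finset.Ioc a n := by
    intro a ha
    rw [Finset.mem_Icc] at ha
    ext b
    simp only [Finset.mem_filter, Finset.mem_Icc, Finset.mem_Ioc]
    omega
  have hins : Finset.Icc (K + 1) n = insert (K + 1) (Finset.Icc (K + 2) n) := by
    ext x
    simp only [Finset.mem_Icc, Finset.mem_insert]
    omega
  have hnm : K + 1 ∉ Finset.Icc (K + 2) n := by
    simp only [Finset.mem_Icc]; omega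
  have hdiag0 : g (K + 1) (K + 1) = 0 := by
    simp [hg, Tv_empty]
  have hrow0 : ∀ b, g (K + 1) b = 0 := by
    intro b
    simp [hg, Tv_empty]
  have hdiag : ∀ v ∈ Finset.Icc (K + 2) n,
      g v v = (1 - s) ^ ((v - K - 1) * (n - v + 1))
        - (1 - s) ^ (2 * ((v - K - 1) * (n - v + 1))) := by
    intro v hv
    rw [Finset.mem_Icc] at hv
    simp only [hg]
    simp only [Finset.union_self]
    rw [Tv_card K n v (by omega) hv.2, ← pow_add, ← two_mul]
  have hoff : ∀ a ∈ Finset.Icc (K + 2) n, ∀ b ∈ Finset.Ioc a n,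
      g a b = (1 - s) ^ ((a - K - 1) * (n - a + 1) + (b - a) * (n - b + 1))
        - (1 - s) ^ ((a - K - 1) * (n - a + 1) + (b - K - 1) * (n - b + 1)) := by
    intro a ha b hb
    rw [Finset.mem_Icc] at ha
    rw [Finset.mem_Ioc] at hb
    simp only [hg]
    rw [union_card K n a b (by omega) hb.1 hb.2, Tv_card K n a (by omega) ha.2,
      Tv_card K n b (by omega) hb.2, ← pow_add]
  have hD : ∑ a ∈ Finset.Icc (K + 1) n, g a a
      = (∑ v ∈ Finset.Icc (K + 2) n, (1 - s) ^ ((v - K - 1) * (n - v + 1)))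
        - ∑ v ∈ Finset.Icc (K + 2) n, (1 - s) ^ (2 * ((v - K - 1) * (n - v + 1))) := by
    rw [hins, Finset.sum_insert hnm, hdiag0, zero_add, Finset.sum_congr rfl hdiag,
      Finset.sum_sub_distrib]
  have hO : ∑ a ∈ Finset.Icc (K + 1) n, ∑ b ∈ (Finset.Icc (K + 1) n).filter (fun b => a < b), g a b
      = (∑ v₁ ∈ Finset.Icc (K + 2) n, ∑ v₂ ∈ Finset.Ioc v₁ n,
          (1 - s) ^ ((v₁ - K - 1) * (n - v₁ + 1) + (v₂ - v₁) * (n - v₂ + 1)))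
        - ∑ v₁ ∈ Finset.Icc (K + 2) n, ∑ v₂ ∈ Finset.Ioc v₁ n,
          (1 - s) ^ ((v₁ - K - 1) * (n - v₁ + 1) + (v₂ - K - 1) * (n - v₂ + 1)) := by
    rw [Finset.sum_congr rfl (fun a ha => by rw [hfilter a ha])]
    rw [hins, Finset.sum_insert hnm,
      show ∑ b ∈ Finset.Ioc (K + 1) n, g (K + 1) b = 0 from
        Finset.sum_eq_zero fun b _ => hrow0 b, zero_add]
    rw [Finset.sum_congr rfl fun a ha => Finset.sum_congr rfl fun b hb => hoff a ha b hb]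
    rw [Finset.sum_congr rfl fun a _ => Finset.sum_sub_distrib _ _, Finset.sum_sub_distrib]
  rw [hD, hO]
  ring
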